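/- Let ψ : (0,∞) → (0,∞) be continuous and satisfy the weak scaling condition at infinity with constants a̲_ψ, ā_ψ > 0 and exponents 0 < δ̲_ψ ≤ δ̄_ψ < 1, and let V : (0,1] → (0,1) be nondecreasing and satisfy the weak scaling condition at zero with constants ã₁, ã₂ > 0 and exponents 0 < δ̲_V ≤ δ̄_V < 1. Then for every c ≥ 1 there exists C > 1 such that for all s, t ∈ (0, 1/2] with c⁻¹ t ≤ s ≤ c t, one has C⁻¹ ≤ ( V(t) ∫_{V(t)}^1 ψ(h^{-2}) dh ) / ( V(s) ∫_{V(s)}^1 ψ(h^{-2}) dh ) ≤ C. -/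

import Mathlib

open Real MeasureTheory

set_option maxHeartbeats 1000000 in
/-- If `ψ` is continuous and satisfies the weak scaling condition at infinity, and `V` is
nondecreasing with values in `(0,1)` and satisfies the weak scaling condition at zero, then
`t ↦ V(t) ∫_{V(t)}^1 ψ(h⁻²) dh` is comparable at comparable scales `s ≍ t` in `(0, 1/2]`. -/
theorem stmt_2 (ψ V : ℝ → ℝ) (aψ₁ aψ₂ δψ₁ δψ₂ aV₁ aV₂ δV₁ δV₂ : ℝ)
    (haψ₁ : 0 < aψ₁) (haψ₂ : 0 < aψ₂) (hδψ₁ : 0 < δψ₁) (hδψ : δψ₁ ≤ δψ₂) (hδψ₂ : δψ₂ < 1)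
    (haV₁ : 0 < aV₁) (haV₂ : 0 < aV₂) (hδV₁ : 0 < δV₁) (hδV : δV₁ ≤ δV₂) (hδV₂ : δV₂ < 1)
    (hψcont : ContinuousOn ψ (Set.Ioi 0))
    (hψpos : ∀ t : ℝ, 0 < t → 0 < ψ t)
    (hVrange : ∀ t : ℝ, 0 < t → t ≤ 1 → 0 < V t ∧ V t < 1)
    (hVmono : ∀ s t : ℝ, 0 < s → s ≤ t → t ≤ 1 → V s ≤ V t)
    (hψscale : ∀ lam t : ℝ, 1 ≤ lam → 1 ≤ t →
      aψ₁ * lam ^ δψ₁ * ψ t ≤ ψ (lam * t) ∧ ψ (lam * t) ≤ aψ₂ * lam ^ δψ₂ * ψ t)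
    (hVscale : ∀ s t : ℝ, 0 < s → s ≤ t → t ≤ 1 →
      aV₁ * (t / s) ^ δV₁ ≤ V t / V s ∧ V t / V s ≤ aV₂ * (t / s) ^ δV₂) :
    ∀ c : ℝ, 1 ≤ c → ∃ C : ℝ, 1 < C ∧ ∀ s t : ℝ,
      0 < s → s ≤ 1 / 2 → 0 < t → t ≤ 1 / 2 → c⁻¹ * t ≤ s → s ≤ c * t →
      C⁻¹ ≤ (V t * ∫ h in Set.Ioc (V t) 1, ψ (1 / h ^ 2)) /
              (V s * ∫ h in Set.Ioc (V s) 1, ψ (1 / h ^ 2)) ∧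
      (V t * ∫ h in Set.Ioc (V t) 1, ψ (1 / h ^ 2)) /
          (V s * ∫ h in Set.Ioc (V s) 1, ψ (1 / h ^ 2)) ≤ C := by
  intro c hc
  have hc0 : (0 : ℝ) < c := lt_of_lt_of_le one_pos hc
  set f : ℝ → ℝ := fun h => ψ (1 / h ^ 2) with hfdef
  have hfpos : ∀ h : ℝ, 0 < h → 0 < f h := fun h hh => hψpos _ (by positivity)
  -- continuity of f on (0, ∞)
  have hfcont : ContinuousOn f (Set.Ioi 0) := by
    apply hψcont.comp
    · exact ContinuousOn.div continuousOn_const ((continuous_pow 2).continuousOn)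
        (fun x hx => pow_ne_zero 2 (ne_of_gt (Set.mem_Ioi.1 hx)))
    · intro x hx
      simp only [Set.mem_Ioi] at hx ⊢
      positivity
  -- integrability
  have hfint : ∀ a : ℝ, 0 < a → IntegrableOn f (Set.Ioc a 1) := by
    intro a ha
    have h1 : Set.Icc a 1 ⊆ Set.Ioi 0 := fun z hz => lt_of_lt_of_le ha hz.1
    exact ((hfcont.mono h1).integrableOn_Icc).mono_set Set.Ioc_subset_Icc_self
  set I : ℝ → ℝ := fun a => ∫ h in Set.Ioc a 1, f h with hIdef
  -- monotonicity of I
  have hImono : ∀ x y : ℝ, 0 < x → x ≤ y → I y ≤ I x := by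
    intro x y hx hxy
    apply setIntegral_mono_set (hfint x hx)
    · exact (ae_restrict_iff' measurableSet_Ioc).2
        (ae_of_all _ fun h hh => (hfpos h (lt_of_lt_of_le hx (le_of_lt hh.1))).le)
    · exact HasSubset.Subset.eventuallyLE (Set.Ioc_subset_Ioc_left hxy)
  -- splitting of I
  have hIsplit : ∀ x y : ℝ, 0 < x → x ≤ y → y ≤ 1 →
      I x = (∫ h in Set.Ioc x y, f h) + I y := by
    intro x y hx hxy hy1
    have h1 : IntegrableOn f (Set.Ioc x y) :=
      (hfint x hx).mono_set (Set.Ioc_subset_Ioc_right hy1)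
    have h2 : IntegrableOn f (Set.Ioc y 1) := hfint y (lt_of_lt_of_le hx hxy)
    have := setIntegral_union (Set.Ioc_disjoint_Ioc_of_le le_rfl) measurableSet_Ioc h1 h2 (f := f)
      (μ := volume)
    rw [Set.Ioc_union_Ioc_eq_Ioc hxy hy1] at this
    exact this
  -- integral upper/lower bounds from pointwise bounds
  have hintub : ∀ x y M : ℝ, 0 < x → x ≤ y → y ≤ 1 → (∀ h ∈ Set.Ioc x y, f h ≤ M) →
      (∫ h in Set.Ioc x y, f h) ≤ M * (y - x) := by
    intro x y M hx hxy hy1 hb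
    have hint : IntegrableOn f (Set.Ioc x y) :=
      (hfint x hx).mono_set (Set.Ioc_subset_Ioc_right hy1)
    have hMint : IntegrableOn (fun _ : ℝ => M) (Set.Ioc x y) :=
      integrableOn_const (by simp [Real.volume_Ioc])
    have := setIntegral_mono_on hint hMint measurableSet_Ioc hb
    simpa [Real.volume_Ioc, ENNReal.toReal_ofReal (sub_nonneg.2 hxy), max_eq_left (sub_nonneg.2 hxy), smul_eq_mul,
      mul_comm] using this
  have hintlb : ∀ x y M : ℝ, 0 < x → x ≤ y → y ≤ 1 → (∀ h ∈ Set.Ioc x y, M ≤ f h) →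
      M * (y - x) ≤ ∫ h in Set.Ioc x y, f h := by
    intro x y M hx hxy hy1 hb
    have hint : IntegrableOn f (Set.Ioc x y) :=
      (hfint x hx).mono_set (Set.Ioc_subset_Ioc_right hy1)
    have hMint : IntegrableOn (fun _ : ℝ => M) (Set.Ioc x y) :=
      integrableOn_const (by simp [Real.volume_Ioc])
    have := setIntegral_mono_on hMint hint measurableSet_Ioc hb
    simpa [Real.volume_Ioc, ENNReal.toReal_ofReal (sub_nonneg.2 hxy), max_eq_left (sub_nonneg.2 hxy), smul_eq_mul,
      mul_comm] using this
  -- the basic scaling estimate for f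
  have hscale2 : ∀ h y : ℝ, 0 < h → h ≤ y → y ≤ 1 → f h ≤ aψ₂ * (y / h) ^ 2 * f y := by
    intro h y hh hhy hy1
    have hy : 0 < y := lt_of_lt_of_le hh hhy
    have hlam1 : (1 : ℝ) ≤ y / h := (one_le_div hh).2 hhy
    have hlam : (1 : ℝ) ≤ (y / h) ^ 2 := by nlinarith
    have ht' : (1 : ℝ) ≤ 1 / y ^ 2 := (one_le_div (by positivity)).2 (by nlinarith)
    have h2 := (hψscale ((y / h) ^ 2) (1 / y ^ 2) hlam ht').2
    have heq : (y / h) ^ 2 * (1 / y ^ 2) = 1 / h ^ 2 := by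
      field_simp
    rw [heq] at h2
    have h3 : ((y / h) ^ 2 : ℝ) ^ δψ₂ ≤ (y / h) ^ 2 := by
      have := Real.rpow_le_rpow_of_exponent_le hlam (le_of_lt hδψ₂)
      rwa [Real.rpow_one] at this
    have hψy : (0 : ℝ) ≤ ψ (1 / y ^ 2) := (hψpos _ (by positivity)).le
    calc f h ≤ aψ₂ * ((y / h) ^ 2 : ℝ) ^ δψ₂ * ψ (1 / y ^ 2) := h2
      _ ≤ aψ₂ * (y / h) ^ 2 * ψ (1 / y ^ 2) := by
          apply mul_le_mul_of_nonneg_right _ hψy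
          exact mul_le_mul_of_nonneg_left h3 haψ₂.le
      _ = aψ₂ * (y / h) ^ 2 * f y := rfl
  -- set up constants
  obtain ⟨hy₀pos, hy₀lt⟩ := hVrange (1 / 2) (by norm_num) (by norm_num)
  set y₀ := V (1 / 2) with hy₀def
  set r := min 2 (1 / y₀) with hrdef
  have hr1 : 1 < r := lt_min one_lt_two ((one_lt_div hy₀pos).2 hy₀lt)
  have hr2 : r ≤ 2 := min_le_left _ _
  have hry1 : ∀ y : ℝ, 0 < y → y ≤ y₀ → r * y ≤ 1 := by
    intro y hy hyy
    calc r * y ≤ (1 / y₀) * y := by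
          exact mul_le_mul_of_nonneg_right (min_le_right _ _) hy.le
      _ ≤ (1 / y₀) * y₀ := by
          exact mul_le_mul_of_nonneg_left hyy (by positivity)
      _ = 1 := by field_simp
  set κ := max (aV₂ * c) 1 with hκdef
  have hκ1 : (1 : ℝ) ≤ κ := le_max_right _ _
  have hκ0 : (0 : ℝ) < κ := lt_of_lt_of_le one_pos hκ1
  set K := 4 * aψ₂ ^ 2 * κ ^ 2 / (r - 1) + 1 with hKdef
  have hKpos : (0 : ℝ) < 4 * aψ₂ ^ 2 * κ ^ 2 / (r - 1) := by
    have : (0 : ℝ) < r - 1 := by linarith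
    positivity
  have hK1 : (1 : ℝ) < K := by rw [hKdef]; linarith
  -- lower bound for I y
  have hIlow : ∀ y : ℝ, 0 < y → y ≤ y₀ →
      (r - 1) * y * (f y / (4 * aψ₂)) ≤ I y := by
    intro y hy hyy
    have hry : r * y ≤ 1 := hry1 y hy hyy
    have hyr : y ≤ r * y := by nlinarith
    have hpt : ∀ h ∈ Set.Ioc y (r * y), f y / (4 * aψ₂) ≤ f h := by
      intro h hh
      obtain ⟨hh1, hh2⟩ := hh
      have hh0 : 0 < h := lt_trans hy hh1
      have h1 : h ≤ 1 := le_trans hh2 hry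
      have := hscale2 y h hy hh1.le h1
      have hlam4 : (h / y) ^ 2 ≤ 4 := by
        have : h / y ≤ 2 := by
          rw [div_le_iff₀ hy]
          calc h ≤ r * y := hh2
            _ ≤ 2 * y := by nlinarith
        have h0 : 0 ≤ h / y := by positivity
        nlinarith
      have hfh : 0 ≤ f h := (hfpos h hh0).le
      rw [div_le_iff₀ (by positivity)]
      calc f y ≤ aψ₂ * (h / y) ^ 2 * f h := this
        _ ≤ aψ₂ * 4 * f h := by
            apply mul_le_mul_of_nonneg_right _ hfh
            exact mul_le_mul_of_nonneg_left hlam4 haψ₂.le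
        _ = f h * (4 * aψ₂) := by ring
    have hIb : (∫ h in Set.Ioc y (r * y), f h) ≤ I y := by
      apply setIntegral_mono_set (hfint y hy)
      · exact (ae_restrict_iff' measurableSet_Ioc).2
          (ae_of_all _ fun h hh => (hfpos h (lt_trans hy hh.1)).le)
      · exact HasSubset.Subset.eventuallyLE (Set.Ioc_subset_Ioc_right hry)
    calc (r - 1) * y * (f y / (4 * aψ₂)) = (f y / (4 * aψ₂)) * (r * y - y) := by ring
      _ ≤ ∫ h in Set.Ioc y (r * y), f h := hintlb y (r * y) _ hy hyr hry hpt
      _ ≤ I y := hIb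
  have hIpos : ∀ y : ℝ, 0 < y → y ≤ y₀ → 0 < I y := by
    intro y hy hyy
    have := hIlow y hy hyy
    have h0 : (0 : ℝ) < (r - 1) * y * (f y / (4 * aψ₂)) := by
      have := hfpos y hy
      have hr0 : (0 : ℝ) < r - 1 := by linarith
      positivity
    linarith
  -- the key comparison
  have hKey : ∀ x y : ℝ, 0 < x → x ≤ y → y ≤ y₀ → y ≤ κ * x → I x ≤ K * I y := by
    intro x y hx hxy hyy hyκ
    have hy : 0 < y := lt_of_lt_of_le hx hxy
    have hy1 : y ≤ 1 := hyy.trans hy₀lt.le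
    have hpt : ∀ h ∈ Set.Ioc x y, f h ≤ aψ₂ * κ ^ 2 * f y := by
      intro h hh
      obtain ⟨hh1, hh2⟩ := hh
      have hh0 : 0 < h := lt_trans hx hh1
      have := hscale2 h y hh0 hh2 hy1
      have hκ2 : (y / h) ^ 2 ≤ κ ^ 2 := by
        have h1 : y / h ≤ κ := by
          rw [div_le_iff₀ hh0]
          calc y ≤ κ * x := hyκ
            _ ≤ κ * h := by nlinarith
        have h0 : 0 ≤ y / h := by positivity
        nlinarith
      have hfy : 0 ≤ f y := (hfpos y hy).le
      calc f h ≤ aψ₂ * (y / h) ^ 2 * f y := this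
        _ ≤ aψ₂ * κ ^ 2 * f y := by
            apply mul_le_mul_of_nonneg_right _ hfy
            exact mul_le_mul_of_nonneg_left hκ2 haψ₂.le
    have hchunk : (∫ h in Set.Ioc x y, f h) ≤ aψ₂ * κ ^ 2 * f y * (y - x) :=
      hintub x y _ hx hxy hy1 hpt
    have hlow := hIlow y hy hyy
    have hr0 : (0 : ℝ) < r - 1 := by linarith
    have hfy : 0 < f y := hfpos y hy
    have hsplit := hIsplit x y hx hxy hy1
    -- aψ₂ κ² f y (y - x) ≤ (K - 1) * I y
    have hmain : aψ₂ * κ ^ 2 * f y * (y - x) ≤ (4 * aψ₂ ^ 2 * κ ^ 2 / (r - 1)) * I y := by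
      have h1 : (4 * aψ₂ ^ 2 * κ ^ 2 / (r - 1)) * ((r - 1) * y * (f y / (4 * aψ₂)))
          = aψ₂ * κ ^ 2 * f y * y := by
        field_simp
      have h2 : (4 * aψ₂ ^ 2 * κ ^ 2 / (r - 1)) * ((r - 1) * y * (f y / (4 * aψ₂)))
          ≤ (4 * aψ₂ ^ 2 * κ ^ 2 / (r - 1)) * I y :=
        mul_le_mul_of_nonneg_left hlow hKpos.le
      have h3 : aψ₂ * κ ^ 2 * f y * (y - x) ≤ aψ₂ * κ ^ 2 * f y * y :=
        mul_le_mul_of_nonneg_left (by linarith : y - x ≤ y)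
          (mul_nonneg (by positivity) hfy.le)
      rw [h1] at h2
      linarith
    have hIy := hIpos y hy hyy
    calc I x = (∫ h in Set.Ioc x y, f h) + I y := hsplit
      _ ≤ aψ₂ * κ ^ 2 * f y * (y - x) + I y := by linarith
      _ ≤ (4 * aψ₂ ^ 2 * κ ^ 2 / (r - 1)) * I y + I y := by linarith
      _ = K * I y := by rw [hKdef]; ring
  -- choose C
  refine ⟨max κ K + 1, by have := le_max_right κ K; linarith, ?_⟩
  intro s t hs hs2 ht ht2 hcs hsc
  set C := max κ K + 1 with hCdef
  have hCκ : κ ≤ C := by have := le_max_left κ K; linarith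
  have hCK : K ≤ C := by have := le_max_right κ K; linarith
  have hC0 : (0 : ℝ) < C := by linarith
  -- values of V
  obtain ⟨hVs, hVs1⟩ := hVrange s hs (by linarith)
  obtain ⟨hVt, hVt1⟩ := hVrange t ht (by linarith)
  have hVsy₀ : V s ≤ y₀ := hVmono s (1 / 2) hs hs2 (by norm_num)
  have hVty₀ : V t ≤ y₀ := hVmono t (1 / 2) ht ht2 (by norm_num)
  -- comparability of V s and V t via κ, in both orders
  have hVcomp : ∀ u v : ℝ, 0 < u → u ≤ v → v ≤ 1 → v ≤ c * u → V v ≤ κ * V u := by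
    intro u v hu huv hv1 hvc
    have hVu := (hVrange u hu (by linarith)).1
    have h1 := (hVscale u v hu huv hv1).2
    have hdvc : v / u ≤ c := (div_le_iff₀ hu).2 (by linarith [hvc])
    have hdv1 : (0 : ℝ) ≤ v / u := le_of_lt (div_pos (lt_of_lt_of_le hu huv) hu)
    have h2 : (v / u) ^ δV₂ ≤ c := by
      calc (v / u) ^ δV₂ ≤ c ^ δV₂ := Real.rpow_le_rpow hdv1 hdvc (by linarith)
        _ ≤ c ^ (1 : ℝ) := Real.rpow_le_rpow_of_exponent_le hc (by linarith)
        _ = c := Real.rpow_one c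
    have h3 : V v / V u ≤ aV₂ * c := by
      calc V v / V u ≤ aV₂ * (v / u) ^ δV₂ := h1
        _ ≤ aV₂ * c := mul_le_mul_of_nonneg_left h2 haV₂.le
    have h4 : V v / V u ≤ κ := h3.trans (le_max_left _ _)
    rwa [div_le_iff₀ hVu] at h4
  -- core argument, for ordered pair x = V u ≤ y = V v
  have hcore : ∀ x y : ℝ, 0 < x → x ≤ y → y ≤ y₀ → y ≤ κ * x →
      ((y * I y) / (x * I x) ≤ κ ∧ K⁻¹ ≤ (y * I y) / (x * I x)) ∧
      ((x * I x) / (y * I y) ≤ K ∧ κ⁻¹ ≤ (x * I x) / (y * I y)) := by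
    intro x y hx hxy hyy hyκ
    have hy : 0 < y := lt_of_lt_of_le hx hxy
    have hxy₀ : x ≤ y₀ := hxy.trans hyy
    have hIx := hIpos x hx hxy₀
    have hIy := hIpos y hy hyy
    have hIyx := hImono x y hx hxy
    have hxK := hKey x y hx hxy hyy hyκ
    have hB : 0 < x * I x := mul_pos hx hIx
    have hA : 0 < y * I y := mul_pos hy hIy
    have hub : y * I y ≤ κ * (x * I x) := by
      calc y * I y ≤ (κ * x) * I y := mul_le_mul_of_nonneg_right hyκ hIy.le
        _ ≤ (κ * x) * I x := mul_le_mul_of_nonneg_left hIyx (by positivity)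
        _ = κ * (x * I x) := by ring
    have hlb : x * I x ≤ K * (y * I y) := by
      calc x * I x ≤ x * (K * I y) := mul_le_mul_of_nonneg_left hxK hx.le
        _ ≤ y * (K * I y) := mul_le_mul_of_nonneg_right hxy
            (mul_nonneg (by linarith) hIy.le)
        _ = K * (y * I y) := by ring
    constructor
    · constructor
      · rw [div_le_iff₀ hB]; linarith
      · rw [le_div_iff₀ hB, inv_mul_le_iff₀ (by linarith : (0:ℝ) < K)]; linarith
    · constructor
      · rw [div_le_iff₀ hA]; linarith
      · rw [le_div_iff₀ hA, inv_mul_le_iff₀ hκ0]; linarith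
  -- finish by cases
  have hCinv : C⁻¹ ≤ κ⁻¹ ∧ C⁻¹ ≤ K⁻¹ := by
    constructor
    · exact inv_anti₀ hκ0 hCκ
    · exact inv_anti₀ (by linarith) hCK
  rcases le_total s t with hst | hts
  · have hVst : V s ≤ V t := hVmono s t hs hst (by linarith)
    have hκst : V t ≤ κ * V s := hVcomp s t hs hst (by linarith) (by
      have : t ≤ c * s := by
        have := mul_le_mul_of_nonneg_left hcs hc0.le
        rwa [mul_inv_cancel_left₀ (ne_of_gt hc0)] at this
      linarith)
    obtain ⟨⟨h1, h2⟩, _⟩ := hcore (V s) (V t) hVs hVst hVty₀ hκst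
    exact ⟨le_trans hCinv.2 h2, le_trans h1 hCκ⟩
  · have hVts : V t ≤ V s := hVmono t s ht hts (by linarith)
    have hκts : V s ≤ κ * V t := hVcomp t s ht hts (by linarith) hsc
    obtain ⟨_, ⟨h1, h2⟩⟩ := hcore (V t) (V s) hVt hVts hVsy₀ hκts
    exact ⟨le_trans hCinv.1 h2, le_trans h1 hCK⟩
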